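/- Let M = ⊕_{ℓ∈ℤ} M_ℓ be a ℤ-graded ℚ(q)-vector space, and let c, b ∈ ℤ. Suppose X, Y, F, Q are linear operators on M such that X and Y raise degree by 2, F lowers degree by 2, Q preserves degree, and: (i) X·Y = q²·Y·X; (ii) for all ℓ and all v ∈ M_ℓ, (Y·F - F·Y)v = [ℓ + bc]·v; (iii) for all ℓ and all v ∈ M_ℓ, (X·F - F·X)v = q^{(b+1)c}·q^ℓ·(Qv). Then for all ℓ and all v ∈ M_ℓ, q^c·(Q·Y - Y·Q)v = [2]·Xv. -/

import Mathlib

noncomputable def q : RatFunc ℚ := RatFunc.X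

/-- The quantum integer [n] = (q^n - q^{-n})/(q - q^{-1}) in ℚ(q). -/
noncomputable def qint (n : ℤ) : RatFunc ℚ := (q ^ n - q ^ (-n)) / (q - q⁻¹)

lemma q_ne_zero : q ≠ 0 := RatFunc.X_ne_zero

lemma q_sub_inv_ne_zero : q - q⁻¹ ≠ 0 := by
  intro h
  have h2 : q ^ 2 = 1 := by
    have := sub_eq_zero.mp h
    field_simp [q_ne_zero] at this
    linear_combination this
  have : (Polynomial.X : Polynomial ℚ) ^ 2 = 1 := by
    apply RatFunc.algebraMap_injective ℚ
    simpa [map_pow, RatFunc.algebraMap_X, q] using h2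
  simpa using congrArg Polynomial.natDegree this

lemma key_scalar (n : ℤ) :
    q ^ (2:ℤ) * qint (n + 2) - qint n = q ^ (n + 2) * (q + q⁻¹) := by
  have hq := q_ne_zero
  have hd := q_sub_inv_ne_zero
  have hn : q ^ n ≠ 0 := zpow_ne_zero _ hq
  unfold qint
  rw [mul_div_assoc', ← sub_div, div_eq_iff hd]
  rw [show -(n+2) = -n + (-2) by ring, zpow_add₀ hq n 2, zpow_add₀ hq (-n) (-2),
    zpow_neg, zpow_neg]
  have h2 : (q:RatFunc ℚ) ^ (2:ℤ) = q * q := by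
    rw [show (2:ℤ) = ((2:ℕ):ℤ) by norm_num, zpow_natCast]; ring
  rw [h2]
  field_simp
  ring

theorem case_a_zero_i_eq_j (c b : ℤ) {M : Type*} [AddCommGroup M] [Module (RatFunc ℚ) M]
    (Mℓ : ℤ → Submodule (RatFunc ℚ) M)
    (hInt : DirectSum.IsInternal Mℓ)
    (X Y F Q : M →ₗ[RatFunc ℚ] M)
    (hX : ∀ (ℓ : ℤ) (v : M), v ∈ Mℓ ℓ → X v ∈ Mℓ (ℓ + 2))
    (hY : ∀ (ℓ : ℤ) (v : M), v ∈ Mℓ ℓ → Y v ∈ Mℓ (ℓ + 2))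
    (hF : ∀ (ℓ : ℤ) (v : M), v ∈ Mℓ ℓ → F v ∈ Mℓ (ℓ - 2))
    (hQ : ∀ (ℓ : ℤ) (v : M), v ∈ Mℓ ℓ → Q v ∈ Mℓ ℓ)
    (hXY : ∀ v : M, X (Y v) = (q ^ (2 : ℤ)) • Y (X v))
    (hYF : ∀ (ℓ : ℤ) (v : M), v ∈ Mℓ ℓ → Y (F v) - F (Y v) = qint (ℓ + b * c) • v)
    (hXF : ∀ (ℓ : ℤ) (v : M), v ∈ Mℓ ℓ →
      X (F v) - F (X v) = (q ^ ((b + 1) * c) * q ^ ℓ) • Q v) :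
    ∀ (ℓ : ℤ) (v : M), v ∈ Mℓ ℓ →
      (q ^ c) • (Q (Y v) - Y (Q v)) = (q + q⁻¹) • X v := by
  intro ℓ v hv
  have hq := q_ne_zero
  have h1 := hXF (ℓ + 2) (Y v) (hY ℓ v hv)
  have h2 := hYF ℓ v hv
  have h3 := hYF (ℓ + 2) (X v) (hX ℓ v hv)
  have h4 := hXF ℓ v hv
  have h5 := hXY (F v)
  have h6 : F (X (Y v)) = (q ^ (2:ℤ)) • F (Y (X v)) := by rw [hXY v, map_smul]
  have h2' : X (Y (F v)) - X (F (Y v)) = qint (ℓ + b * c) • X v := by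
    rw [← map_sub, h2, map_smul]
  have h4' : Y (X (F v)) - Y (F (X v)) = (q ^ ((b + 1) * c) * q ^ ℓ) • Y (Q v) := by
    rw [← map_sub, h4, map_smul]
  have hs1 : (q ^ ((b + 1) * c) * q ^ (ℓ + 2) : RatFunc ℚ)
      = q ^ (2:ℤ) * (q ^ ((b + 1) * c) * q ^ ℓ) := by
    rw [zpow_add₀ hq ℓ 2]; ring
  rw [hs1] at h1
  rw [show ℓ + 2 + b * c = ℓ + b * c + 2 by ring] at h3
  have main : (q ^ (2:ℤ) * (q ^ ((b + 1) * c) * q ^ ℓ)) • (Q (Y v) - Y (Q v))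
      = (q ^ (2:ℤ) * qint (ℓ + b * c + 2) - qint (ℓ + b * c)) • X v := by
    rw [smul_sub, ← h1, mul_smul (q ^ (2:ℤ)) _ (Y (Q v)), ← h4', sub_smul, mul_smul]
    simp only [smul_sub]
    rw [← h5, h6, ← h3, ← h2']
    simp only [smul_sub]
    abel
  have hw : (q ^ (b * c) * q ^ ℓ * q ^ (2:ℤ) : RatFunc ℚ) ≠ 0 := by
    exact mul_ne_zero (mul_ne_zero (zpow_ne_zero _ hq) (zpow_ne_zero _ hq)) (zpow_ne_zero _ hq)
  apply smul_right_injective M hw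
  show (q ^ (b * c) * q ^ ℓ * q ^ (2:ℤ)) • q ^ c • (Q (Y v) - Y (Q v))
      = (q ^ (b * c) * q ^ ℓ * q ^ (2:ℤ)) • (q + q⁻¹) • X v
  rw [smul_smul, smul_smul]
  have e1 : (q ^ (b * c) * q ^ ℓ * q ^ (2:ℤ)) * q ^ c
      = q ^ (2:ℤ) * (q ^ ((b + 1) * c) * q ^ ℓ) := by
    rw [show (b + 1) * c = b * c + c by ring, zpow_add₀ hq (b * c) c]; ring
  have e2 : (q ^ (b * c) * q ^ ℓ * q ^ (2:ℤ)) * (q + q⁻¹)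
      = q ^ (2:ℤ) * qint (ℓ + b * c + 2) - qint (ℓ + b * c) := by
    rw [key_scalar (ℓ + b * c), show ℓ + b * c + 2 = ℓ + (b * c + 2) by ring,
      zpow_add₀ hq ℓ (b * c + 2), zpow_add₀ hq (b * c) 2]; ring
  rw [e1, e2]
  exact main
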